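/- Let L : R^n -> R be convex and X in R^{n x d}. The weight-decay regularized problem min over (W_1 in R^{m x d}, w_2 in R^m) of L(sum_i D_i X W_{1i} w_{2i}) + (lambda/2) sum_i (||W_{1i}||_2^2 + w_{2i}^2), where D_1,...,D_m are fixed diagonal 0/1 matrices, has the same optimal value as the group-lasso problem min over u = (u_1,...,u_m), u_i in R^d, of L(sum_i D_i X u_i) + lambda sum_i ||u_i||_2. -/
import Mathlib

open Matrix

/-- Euclidean norm on `Fin k → ℝ`. -/
noncomputable def norm2 {k : ℕ} (v : Fin k → ℝ) : ℝ := Real.sqrt (∑ i, v i ^ 2)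

lemma norm2_nonneg {k : ℕ} (v : Fin k → ℝ) : 0 ≤ norm2 v := Real.sqrt_nonneg _

lemma sq_norm2 {k : ℕ} (v : Fin k → ℝ) : norm2 v ^ 2 = ∑ i, v i ^ 2 :=
  Real.sq_sqrt (Finset.sum_nonneg fun i _ => sq_nonneg _)

lemma norm2_eq_zero {k : ℕ} {v : Fin k → ℝ} (h : norm2 v = 0) : v = 0 := by
  have hs : ∑ i, v i ^ 2 = 0 := by
    have := sq_norm2 v
    rw [h] at this
    linarith
  funext i
  have := (Finset.sum_eq_zero_iff_of_nonneg (fun i _ => sq_nonneg (v i))).mp hs i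
    (Finset.mem_univ i)
  exact pow_eq_zero_iff (two_ne_zero) |>.mp this

lemma norm2_smul {k : ℕ} (c : ℝ) (v : Fin k → ℝ) :
    norm2 (fun j => c * v j) = |c| * norm2 v := by
  unfold norm2
  rw [← Real.sqrt_sq_eq_abs, ← Real.sqrt_mul (sq_nonneg c), Finset.mul_sum]
  congr 1
  refine Finset.sum_congr rfl fun j _ => ?_
  ring

/-- The weight-decay regularized two-layer (gated) problem has the same optimal value
as the group-lasso problem. -/
theorem weight_decay_eq_group_lasso {n d m : ℕ}
    (L : (Fin n → ℝ) → ℝ) (hL : ConvexOn ℝ Set.univ L)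
    (X : Matrix (Fin n) (Fin d) ℝ) (lam : ℝ) (hlam : 0 ≤ lam)
    (D : Fin m → Fin n → ℝ) (hD : ∀ i k, D i k = 0 ∨ D i k = 1) :
    sInf {c : ℝ | ∃ (W1 : Fin m → Fin d → ℝ) (w2 : Fin m → ℝ),
        c = L (∑ i, fun k => D i k * X.mulVec (W1 i) k * w2 i)
          + lam / 2 * ∑ i, (norm2 (W1 i) ^ 2 + w2 i ^ 2)} =
    sInf {c : ℝ | ∃ u : Fin m → Fin d → ℝ,
        c = L (∑ i, fun k => D i k * X.mulVec (u i) k) + lam * ∑ i, norm2 (u i)} := by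
  set A := {c : ℝ | ∃ (W1 : Fin m → Fin d → ℝ) (w2 : Fin m → ℝ),
        c = L (∑ i, fun k => D i k * X.mulVec (W1 i) k * w2 i)
          + lam / 2 * ∑ i, (norm2 (W1 i) ^ 2 + w2 i ^ 2)} with hA
  set B := {c : ℝ | ∃ u : Fin m → Fin d → ℝ,
        c = L (∑ i, fun k => D i k * X.mulVec (u i) k) + lam * ∑ i, norm2 (u i)} with hB
  -- Direction 1: for each a ∈ A there is b ∈ B with b ≤ a.
  have h1 : ∀ a ∈ A, ∃ b ∈ B, b ≤ a := by
    rintro a ⟨W1, w2, rfl⟩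
    set u : Fin m → Fin d → ℝ := fun i j => w2 i * W1 i j with hu
    refine ⟨L (∑ i, fun k => D i k * X.mulVec (u i) k) + lam * ∑ i, norm2 (u i),
      ⟨u, rfl⟩, ?_⟩
    have hLeq : (∑ i, fun k => D i k * X.mulVec (u i) k) =
        (∑ i, fun k => D i k * X.mulVec (W1 i) k * w2 i) := by
      refine Finset.sum_congr rfl fun i _ => ?_
      funext k
      simp only [hu, Matrix.mulVec, dotProduct]
      rw [Finset.mul_sum, Finset.mul_sum, Finset.sum_mul]
      refine Finset.sum_congr rfl fun j _ => ?_
      ring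
    have hreg : ∑ i, norm2 (u i) ≤ (∑ i, (norm2 (W1 i) ^ 2 + w2 i ^ 2)) / 2 := by
      rw [Finset.sum_div]
      refine Finset.sum_le_sum fun i _ => ?_
      have : norm2 (u i) = |w2 i| * norm2 (W1 i) := norm2_smul (w2 i) (W1 i)
      nlinarith [sq_nonneg (norm2 (W1 i) - |w2 i|), sq_abs (w2 i), this]
    rw [hLeq]
    have : lam * ∑ i, norm2 (u i) ≤ lam / 2 * ∑ i, (norm2 (W1 i) ^ 2 + w2 i ^ 2) := by
      nlinarith [hreg]
    linarith
  -- Direction 2: B ⊆ A.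
  have h2 : B ⊆ A := by
    rintro b ⟨u, rfl⟩
    set s : Fin m → ℝ := fun i => Real.sqrt (norm2 (u i)) with hs
    set W1 : Fin m → Fin d → ℝ := fun i j => u i j / s i with hW1
    refine ⟨W1, s, ?_⟩
    have hLeq : (∑ i, fun k => D i k * X.mulVec (W1 i) k * s i) =
        (∑ i, fun k => D i k * X.mulVec (u i) k) := by
      refine Finset.sum_congr rfl fun i _ => ?_
      funext k
      by_cases h0 : s i = 0
      · have hn0 : norm2 (u i) = 0 := by
          have := Real.sqrt_eq_zero (norm2_nonneg (u i)) |>.mp (by simpa [hs] using h0)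
          exact this
        have hu0 : u i = 0 := norm2_eq_zero hn0
        simp [h0, hu0, Matrix.mulVec, dotProduct]
      · have : X.mulVec (W1 i) k = X.mulVec (u i) k / s i := by
          simp only [hW1, Matrix.mulVec, dotProduct, Finset.sum_div]
          refine Finset.sum_congr rfl fun j _ => ?_
          ring
        rw [this, mul_assoc, div_mul_cancel₀ _ h0]
    have hreg : ∀ i, norm2 (W1 i) ^ 2 + s i ^ 2 = 2 * norm2 (u i) := by
      intro i
      by_cases h0 : norm2 (u i) = 0
      · have hu0 : u i = 0 := norm2_eq_zero h0
        have : W1 i = 0 := by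
          funext j
          simp [hW1, hu0]
        rw [this, h0]
        simp [hs, h0, norm2, hu0]
      · have hspos : 0 < s i := Real.sqrt_pos.mpr (lt_of_le_of_ne (norm2_nonneg _) (Ne.symm h0))
        have hs2 : s i ^ 2 = norm2 (u i) := Real.sq_sqrt (norm2_nonneg _)
        have hW : norm2 (W1 i) = norm2 (u i) / s i := by
          have : W1 i = fun j => (s i)⁻¹ * u i j := by
            funext j
            simp [hW1, div_eq_inv_mul]
          rw [this, norm2_smul, abs_of_pos (inv_pos.mpr hspos), inv_mul_eq_div]
        rw [hW, hs2, div_pow]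
        rw [hs2]
        field_simp
        ring
    rw [hLeq]
    congr 1
    rw [Finset.sum_congr rfl fun i _ => hreg i, ← Finset.mul_sum]
    ring
  have hAne : A.Nonempty := ⟨_, 0, 0, rfl⟩
  have hBne : B.Nonempty := ⟨_, 0, rfl⟩
  by_cases hb : BddBelow B
  · have ha : BddBelow A := by
      obtain ⟨x, hx⟩ := hb
      refine ⟨x, fun a haA => ?_⟩
      obtain ⟨c, hcB, hca⟩ := h1 a haA
      exact (hx hcB).trans hca
    apply le_antisymm
    · exact csInf_le_csInf ha hBne h2
    · refine le_csInf hAne fun a haA => ?_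
      obtain ⟨c, hcB, hca⟩ := h1 a haA
      exact (csInf_le hb hcB).trans hca
  · have ha : ¬ BddBelow A := fun h => hb (h.mono h2)
    rw [Real.sInf_of_not_bddBelow ha, Real.sInf_of_not_bddBelow hb]
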